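/- arXiv:2603.19911 — 3 statements merged into one kernel-verified Lean document; each statement's English description precedes it below -/
import Mathlib

section
/- Let P be a positive definite complex d×d matrix and let J and K be positive definite complex matrices indexed by ((Fin d) × (Fin d')) × ((Fin d) × (Fin d')). Then D̂((P^{1/2} ⊗ I) J (P^{1/2} ⊗ I) ‖ (P^{1/2} ⊗ I) K (P^{1/2} ⊗ I)) = Re Tr[(P ⊗ I) · D_op(J‖K)], where I is the d'×d' identity matrix. -/
open Matrix Kronecker
open scoped ComplexOrder

noncomputable section

/-- Apply a real function to a complex matrix via the spectral decomposition
(meaningful for Hermitian matrices; defined as `0` otherwise). -/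
def matFun {n : Type*} [Fintype n] [DecidableEq n]
    (f : ℝ → ℝ) (A : Matrix n n ℂ) : Matrix n n ℂ :=
  if hA : A.IsHermitian then
    (hA.eigenvectorUnitary : Matrix n n ℂ) *
      Matrix.diagonal (fun i => (f (hA.eigenvalues i) : ℂ)) *
      (hA.eigenvectorUnitary : Matrix n n ℂ)ᴴ
  else 0

/-- Real power of a matrix (via the spectral decomposition). -/
def mpow {n : Type*} [Fintype n] [DecidableEq n] (A : Matrix n n ℂ) (t : ℝ) :
    Matrix n n ℂ :=
  matFun (fun x => x ^ t) A

/-- Logarithm of a matrix (via the spectral decomposition). -/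
def mlog {n : Type*} [Fintype n] [DecidableEq n] (A : Matrix n n ℂ) : Matrix n n ℂ :=
  matFun Real.log A

/-- The operator relative entropy `D_op(X‖Y) = X^{1/2} log(X^{1/2} Y⁻¹ X^{1/2}) X^{1/2}`. -/
def Dop {n : Type*} [Fintype n] [DecidableEq n] (X Y : Matrix n n ℂ) : Matrix n n ℂ :=
  mpow X (1/2) * mlog (mpow X (1/2) * Y⁻¹ * mpow X (1/2)) * mpow X (1/2)

/-- The Belavkin--Staszewski relative entropy `D̂(ρ‖σ) = Re Tr[D_op(ρ‖σ)]`. -/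
def BSEntropy {n : Type*} [Fintype n] [DecidableEq n] (ρ σ : Matrix n n ℂ) : ℝ :=
  (Dop ρ σ).trace.re

/-- The weighted matrix geometric mean `G_t(X,Y) = X^{1/2} (X^{-1/2} Y X^{-1/2})^t X^{1/2}`. -/
def geoMean {n : Type*} [Fintype n] [DecidableEq n] (t : ℝ) (X Y : Matrix n n ℂ) :
    Matrix n n ℂ :=
  mpow X (1/2) * mpow (mpow X (-(1/2)) * Y * mpow X (-(1/2))) t * mpow X (1/2)

/-- Partial trace over the second (B) factor. -/
def ptraceB {R B : Type*} [Fintype B] (M : Matrix (R × B) (R × B) ℂ) : Matrix R R ℂ :=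
  Matrix.of fun r r' => ∑ b, M (r, b) (r', b)

/-- Partial trace over the first (R) factor. -/
def ptraceR {R A : Type*} [Fintype R] (M : Matrix (R × A) (R × A) ℂ) : Matrix A A ℂ :=
  Matrix.of fun a a' => ∑ r, M (r, a) (r, a')

/-- The map associated to a Choi matrix `J` (indexed by `(A × B) × (A × B)`), applied to a
matrix indexed by `(R × A) × (R × A)`. -/
def choiMap {R A B : Type*} [Fintype A] (J : Matrix (A × B) (A × B) ℂ)
    (X : Matrix (R × A) (R × A) ℂ) : Matrix (R × B) (R × B) ℂ :=
  Matrix.of fun p q => ∑ a, ∑ a', X (p.1, a) (q.1, a') * J (a, p.2) (a', q.2)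


section BSHelpers

variable {n : Type*} [Fintype n] [DecidableEq n]

lemma matFun_eq_cfc (f : ℝ → ℝ) {A : Matrix n n ℂ} (hA : A.IsHermitian) :
    matFun f A = cfc f A := by
  rw [matFun, dif_pos hA, hA.cfc_eq, Matrix.IsHermitian.cfc]
  rfl

lemma matFun_isHermitian (f : ℝ → ℝ) {A : Matrix n n ℂ} (hA : A.IsHermitian) :
    (matFun f A).IsHermitian := by
  rw [matFun_eq_cfc f hA]
  exact cfc_predicate f A

lemma matFun_mul (f g : ℝ → ℝ) {A : Matrix n n ℂ} (hA : A.IsHermitian) :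
    matFun f A * matFun g A = matFun (fun x => f x * g x) A := by
  rw [matFun_eq_cfc f hA, matFun_eq_cfc g hA, matFun_eq_cfc _ hA,
    ← cfc_mul f g A (Matrix.finite_real_spectrum.continuousOn f)
      (Matrix.finite_real_spectrum.continuousOn g)]

/-- Conjugation by a unitary matrix as a star algebra homomorphism. -/
def conjSAH (U : Matrix n n ℂ) (hU : U * star U = 1) (hU' : star U * U = 1) :
    Matrix n n ℂ →⋆ₐ[ℂ] Matrix n n ℂ where
  toFun X := U * X * star U
  map_one' := by show U * 1 * star U = 1; rw [mul_one, hU]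
  map_mul' X Y := by
    simp only [Matrix.mul_assoc]
    rw [← Matrix.mul_assoc (star U) U, hU', Matrix.one_mul]
  map_zero' := by simp
  map_add' X Y := by show U * (X + Y) * star U = _; rw [Matrix.mul_add, Matrix.add_mul]
  commutes' c := by
    simp [Algebra.algebraMap_eq_smul_one, Matrix.smul_mul, Matrix.mul_smul, hU]
  map_star' X := by
    simp [StarMul.star_mul, star_star, Matrix.mul_assoc]

lemma matFun_conj (f : ℝ → ℝ) {A U : Matrix n n ℂ} (hA : A.IsHermitian)
    (hU : U * star U = 1) (hU' : star U * U = 1) :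
    matFun f (U * A * star U) = U * matFun f A * star U := by
  have hA' : (U * A * star U).IsHermitian := by
    have : IsSelfAdjoint (U * A * star U) := by
      have hAsa : IsSelfAdjoint A := hA
      rw [_root_.IsSelfAdjoint, StarMul.star_mul, StarMul.star_mul, star_star, hAsa.star_eq, Matrix.mul_assoc]
    exact this
  have hφc : Continuous (fun X : Matrix n n ℂ => U * X * star U) := by fun_prop
  have := StarAlgHomClass.map_cfc (S := ℂ) (conjSAH U hU hU') f A
    (Matrix.finite_real_spectrum.continuousOn f) hφc hA hA'
  rw [matFun_eq_cfc f hA', matFun_eq_cfc f hA]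
  exact this.symm

lemma spectrum_pos_of_posDef {A : Matrix n n ℂ} (hA : A.PosDef) :
    ∀ x ∈ spectrum ℝ A, 0 < x := by
  intro x hx
  rw [hA.1.spectrum_real_eq_range_eigenvalues] at hx
  obtain ⟨i, rfl⟩ := hx
  exact hA.eigenvalues_pos i

lemma mpow_half_mul_self {A : Matrix n n ℂ} (hA : A.PosDef) :
    mpow A (1/2) * mpow A (1/2) = A := by
  have hsa : IsSelfAdjoint A := hA.1
  rw [mpow, matFun_mul _ _ hA.1, matFun_eq_cfc _ hA.1]
  have h : (spectrum ℝ A).EqOn (fun x => x ^ (1/2 : ℝ) * x ^ (1/2 : ℝ)) id := by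
    intro x hx
    have hx0 : 0 < x := spectrum_pos_of_posDef hA x hx
    simp only [id_eq, ← Real.rpow_add hx0]
    norm_num
  rw [cfc_congr h, cfc_id ℝ A]

lemma mpow_half_isHermitian {A : Matrix n n ℂ} (hA : A.IsHermitian) :
    (mpow A (1/2)).IsHermitian := matFun_isHermitian _ hA

lemma posDef_conj {A B : Matrix n n ℂ} (hA : A.PosDef) (hB : IsUnit B.det) :
    (Bᴴ * A * B).PosDef := by
  refine Matrix.posDef_iff_dotProduct_mulVec.2 ⟨Matrix.isHermitian_conjTranspose_mul_mul B hA.1, fun x hx => ?_⟩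
  have hBx : B *ᵥ x ≠ 0 := by
    intro h
    have hinj : Function.Injective B.mulVec :=
      Matrix.mulVec_injective_iff_isUnit.2 ((Matrix.isUnit_iff_isUnit_det B).2 hB)
    apply hx
    apply hinj
    rw [h, Matrix.mulVec_zero]
  simpa only [Matrix.star_mulVec, Matrix.dotProduct_mulVec, Matrix.vecMul_vecMul] using
    hA.dotProduct_mulVec_pos hBx

lemma kron_one_isHermitian {l : Type*} [Fintype l] [DecidableEq l]
    {A : Matrix n n ℂ} (hA : A.IsHermitian) :
    (A ⊗ₖ (1 : Matrix l l ℂ)).IsHermitian := by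
  ext ⟨i, j⟩ ⟨k, m⟩
  simp only [Matrix.conjTranspose_apply, Matrix.kroneckerMap_apply, star_mul']
  rw [hA.apply]
  congr 1
  by_cases hjm : j = m <;> simp [Matrix.one_apply, hjm, eq_comm]

lemma mlog_conj {A U : Matrix n n ℂ} (hA : A.IsHermitian)
    (hU : U * star U = 1) (hU' : star U * U = 1) :
    mlog (U * A * star U) = U * mlog A * star U :=
  matFun_conj Real.log hA hU hU'

lemma bs_aux {n : Type*} [Fintype n] [DecidableEq n] (Q PI J K : Matrix n n ℂ)
    (hJ : J.PosDef) (hK : K.PosDef) (hQH : Q.IsHermitian) (hQdet : IsUnit Q.det)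
    (hQQ : Q * Q = PI) :
    BSEntropy (Q * J * Q) (Q * K * Q) = (PI * Dop J K).trace.re := by
  have hρ : (Q * J * Q).PosDef := by
    have := posDef_conj hJ hQdet; rwa [hQH] at this
  have hJdet : IsUnit J.det := hJ.det_pos.ne'.isUnit
  have hρdet : IsUnit (Q * J * Q).det := hρ.det_pos.ne'.isUnit
  rw [BSEntropy, Dop, Dop]
  obtain ⟨R, hRdef⟩ : ∃ R', R' = mpow (Q * J * Q) (1/2) := ⟨_, rfl⟩
  obtain ⟨S, hSdef⟩ : ∃ S', S' = mpow J (1/2) := ⟨_, rfl⟩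
  rw [← hRdef, ← hSdef]
  have hRH : R.IsHermitian := hRdef ▸ mpow_half_isHermitian hρ.1
  have hSH : S.IsHermitian := hSdef ▸ mpow_half_isHermitian hJ.1
  have hRR : R * R = Q * J * Q := hRdef ▸ mpow_half_mul_self hρ
  have hSS : S * S = J := hSdef ▸ mpow_half_mul_self hJ
  have hSdet : IsUnit S.det := by
    have h2 : S.det * S.det = J.det := by rw [← Matrix.det_mul, hSS]
    exact isUnit_of_mul_isUnit_left (h2 ▸ hJdet)
  have hRinvdet : IsUnit R.det := by
    have h2 : R.det * R.det = (Q * J * Q).det := by rw [← Matrix.det_mul, hRR]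
    exact isUnit_of_mul_isUnit_left (h2 ▸ hρdet)
  obtain ⟨U, hUdef⟩ : ∃ U', U' = R * Q⁻¹ * S⁻¹ := ⟨_, rfl⟩
  have hQinvH : (Q⁻¹).IsHermitian := hQH.inv
  have hSinvH : (S⁻¹).IsHermitian := hSH.inv
  have hstarU : star U = S⁻¹ * Q⁻¹ * R := by
    rw [hUdef, Matrix.star_eq_conjTranspose, Matrix.conjTranspose_mul,
      Matrix.conjTranspose_mul, hSinvH, hQinvH, hRH, ← Matrix.mul_assoc]
  have hU'U : star U * U = 1 := by
    rw [hstarU, hUdef]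
    have e : S⁻¹ * Q⁻¹ * R * (R * Q⁻¹ * S⁻¹) = S⁻¹ * (Q⁻¹ * (Q * J * Q * (Q⁻¹ * S⁻¹))) := by
      rw [← hRR]; simp only [Matrix.mul_assoc]
    rw [e]
    simp only [Matrix.mul_assoc]
    rw [Matrix.mul_nonsing_inv_cancel_left _ _ hQdet,
      Matrix.nonsing_inv_mul_cancel_left _ _ hQdet, ← hSS,
      Matrix.mul_nonsing_inv_cancel_right _ _ hSdet,
      Matrix.nonsing_inv_mul _ hSdet]
  have hUU : U * star U = 1 := mul_eq_one_comm.mp hU'U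
  have hKinvH : (K⁻¹).IsHermitian := hK.1.inv
  have hNH : (S * K⁻¹ * S).IsHermitian := by
    have := Matrix.isHermitian_conjTranspose_mul_mul S hKinvH
    rwa [hSH] at this
  have hMkey : R * (Q * K * Q)⁻¹ * R = U * (S * K⁻¹ * S) * star U := by
    rw [hstarU, hUdef, Matrix.mul_inv_rev, Matrix.mul_inv_rev]
    simp only [Matrix.mul_assoc]
    rw [Matrix.nonsing_inv_mul_cancel_left _ _ hSdet,
      Matrix.mul_nonsing_inv_cancel_left _ _ hSdet]
  have hconj : mlog (R * (Q * K * Q)⁻¹ * R) = U * mlog (S * K⁻¹ * S) * star U := by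
    rw [hMkey]
    exact mlog_conj hNH hUU hU'U
  obtain ⟨L, hLdef⟩ : ∃ L', L' = mlog (S * K⁻¹ * S) := ⟨_, rfl⟩
  rw [hconj, ← hLdef]
  have hkey2 : star U * (Q * J * Q * U) = S * (PI * S) := by
    rw [hstarU, hUdef, ← hQQ]
    have e : S⁻¹ * Q⁻¹ * R * (Q * J * Q * (R * Q⁻¹ * S⁻¹))
        = S⁻¹ * (Q⁻¹ * ((R * R) * ((R * R) * (Q⁻¹ * S⁻¹)))) := by
      have h4 : Q * J * Q = R * R := hRR.symm
      calc S⁻¹ * Q⁻¹ * R * (Q * J * Q * (R * Q⁻¹ * S⁻¹))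
          = S⁻¹ * Q⁻¹ * (R * (Q * J * Q) * R) * (Q⁻¹ * S⁻¹) := by
            simp only [Matrix.mul_assoc]
        _ = S⁻¹ * Q⁻¹ * (R * (R * R) * R) * (Q⁻¹ * S⁻¹) := by rw [h4]
        _ = S⁻¹ * (Q⁻¹ * ((R * R) * ((R * R) * (Q⁻¹ * S⁻¹)))) := by
            simp only [Matrix.mul_assoc]
    rw [e, hRR]
    simp only [Matrix.mul_assoc]
    rw [Matrix.mul_nonsing_inv_cancel_left _ _ hQdet,
      Matrix.nonsing_inv_mul_cancel_left _ _ hQdet]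
    rw [← hSS]
    simp only [Matrix.mul_assoc]
    rw [Matrix.mul_nonsing_inv _ hSdet, Matrix.mul_one,
      Matrix.nonsing_inv_mul_cancel_left _ _ hSdet]
  calc (R * (U * L * star U) * R).trace.re
      = ((Q * J * Q) * (U * L * star U)).trace.re := by
        rw [Matrix.trace_mul_cycle R (U * L * star U) R, hRR]
    _ = ((star U * (Q * J * Q * U)) * L).trace.re := by
        rw [show (Q * J * Q) * (U * L * star U) = ((Q * J * Q) * U * L) * star U by
          simp only [Matrix.mul_assoc]]
        rw [Matrix.trace_mul_comm]
        congr 2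
        simp only [Matrix.mul_assoc]
    _ = ((S * (PI * S)) * L).trace.re := by rw [hkey2]
    _ = (PI * (S * L * S)).trace.re := by
        rw [show (S * (PI * S)) * L = S * ((PI * S) * L) by simp only [Matrix.mul_assoc]]
        rw [Matrix.trace_mul_comm]
        congr 2
        simp only [Matrix.mul_assoc]


end BSHelpers

set_option maxHeartbeats 800000 in
/-- For positive definite `P` and positive definite `J`, `K` on the bipartite
space, `D̂((P^{1/2} ⊗ I) J (P^{1/2} ⊗ I) ‖ (P^{1/2} ⊗ I) K (P^{1/2} ⊗ I))
  = Re Tr[(P ⊗ I) · D_op(J‖K)]`. -/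
theorem bs_entropy_sandwich_eq_trace {d d' : ℕ}
    (P : Matrix (Fin d) (Fin d) ℂ) (hP : P.PosDef)
    (J K : Matrix ((Fin d) × (Fin d')) ((Fin d) × (Fin d')) ℂ)
    (hJ : J.PosDef) (hK : K.PosDef) :
    BSEntropy
      ((mpow P (1/2) ⊗ₖ (1 : Matrix (Fin d') (Fin d') ℂ)) * J *
        (mpow P (1/2) ⊗ₖ (1 : Matrix (Fin d') (Fin d') ℂ)))
      ((mpow P (1/2) ⊗ₖ (1 : Matrix (Fin d') (Fin d') ℂ)) * K *
        (mpow P (1/2) ⊗ₖ (1 : Matrix (Fin d') (Fin d') ℂ)))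
      = ((P ⊗ₖ (1 : Matrix (Fin d') (Fin d') ℂ)) * Dop J K).trace.re := by
  have hQH : (mpow P (1/2) ⊗ₖ (1 : Matrix (Fin d') (Fin d') ℂ)).IsHermitian :=
    kron_one_isHermitian (mpow_half_isHermitian hP.1)
  have hQQ : (mpow P (1/2) ⊗ₖ (1 : Matrix (Fin d') (Fin d') ℂ)) *
      (mpow P (1/2) ⊗ₖ (1 : Matrix (Fin d') (Fin d') ℂ))
      = P ⊗ₖ (1 : Matrix (Fin d') (Fin d') ℂ) := by
    rw [← Matrix.mul_kronecker_mul, Matrix.one_mul, mpow_half_mul_self hP]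
  have hPIdet : IsUnit (P ⊗ₖ (1 : Matrix (Fin d') (Fin d') ℂ)).det := by
    rw [Matrix.det_kronecker]
    simp only [Matrix.det_one, one_pow, mul_one]
    exact (hP.det_pos.ne'.isUnit).pow _
  have hQdet : IsUnit (mpow P (1/2) ⊗ₖ (1 : Matrix (Fin d') (Fin d') ℂ)).det := by
    have h2 : (mpow P (1/2) ⊗ₖ (1 : Matrix (Fin d') (Fin d') ℂ)).det *
        (mpow P (1/2) ⊗ₖ (1 : Matrix (Fin d') (Fin d') ℂ)).det
        = (P ⊗ₖ (1 : Matrix (Fin d') (Fin d') ℂ)).det := by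
      rw [← Matrix.det_mul, hQQ]
    exact isUnit_of_mul_isUnit_left (h2 ▸ hPIdet)
  exact bs_aux _ _ J K hJ hK hQH hQdet hQQ
end
end

section
/- Let X₁, Y₁ be positive definite complex n×n matrices and X₂, Y₂ be positive definite complex m×m matrices. Then D_op(X₁ ⊗ X₂ ‖ Y₁ ⊗ Y₂) = D_op(X₁‖Y₁) ⊗ X₂ + X₁ ⊗ D_op(X₂‖Y₂). -/
open Matrix Kronecker
open scoped ComplexOrder

noncomputable section

namespace DopAux
open Polynomial

variable {n : Type*} [Fintype n] [DecidableEq n]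

lemma aeval_diagonal (p : ℂ[X]) (d : n → ℂ) :
    (aeval (Matrix.diagonal d) p : Matrix n n ℂ) = Matrix.diagonal (fun i => p.eval (d i)) := by
  induction p using Polynomial.induction_on' with
  | add f g hf hg => simp [hf, hg, diagonal_add]
  | monomial k a =>
      simp [aeval_monomial, Matrix.diagonal_pow, Matrix.algebraMap_eq_diagonal,
        Matrix.diagonal_mul_diagonal, eval_monomial, Pi.algebraMap_def, Algebra.algebraMap_self_apply]

lemma aeval_conj (p : ℂ[X]) (U A : Matrix n n ℂ) (hU : U * Uᴴ = 1) (hU' : Uᴴ * U = 1) :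
    (aeval (U * A * Uᴴ) p : Matrix n n ℂ) = U * (aeval A p) * Uᴴ := by
  induction p using Polynomial.induction_on' with
  | add f g hf hg => simp [hf, hg, mul_add, add_mul]
  | monomial k a =>
      have hpow : ∀ j : ℕ, (U * A * Uᴴ) ^ j = U * A ^ j * Uᴴ := by
        intro j
        induction j with
        | zero => simp [hU]
        | succ j ih =>
            rw [pow_succ, ih, pow_succ]
            calc U * A ^ j * Uᴴ * (U * A * Uᴴ) = U * A ^ j * (Uᴴ * U) * A * Uᴴ := by
                  simp only [Matrix.mul_assoc]
              _ = U * (A ^ j * A) * Uᴴ := by rw [hU']; simp only [Matrix.mul_assoc, Matrix.mul_one]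
              _ = _ := by simp only [Matrix.mul_assoc]
      simp only [aeval_monomial, hpow, ← Algebra.smul_def]
      rw [Matrix.mul_smul, Matrix.smul_mul]


lemma matFun_eq (f : ℝ → ℝ) (A U : Matrix n n ℂ) (d : n → ℝ)
    (hU : U * Uᴴ = 1) (hU' : Uᴴ * U = 1)
    (hA : A = U * Matrix.diagonal (fun i => (d i : ℂ)) * Uᴴ) :
    matFun f A = U * Matrix.diagonal (fun i => (f (d i) : ℂ)) * Uᴴ := by
  have hdiagH : ∀ c : n → ℝ, (Matrix.diagonal (fun i => (c i : ℂ)))ᴴ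
      = Matrix.diagonal (fun i => (c i : ℂ)) := by
    intro c
    rw [Matrix.diagonal_conjTranspose]
    congr 1
    funext i
    simp [Pi.star_def, Complex.conj_ofReal]
  have herm : A.IsHermitian := by
    rw [hA]
    unfold Matrix.IsHermitian
    rw [Matrix.conjTranspose_mul, Matrix.conjTranspose_mul, Matrix.conjTranspose_conjTranspose,
      hdiagH, Matrix.mul_assoc]
  set V : Matrix n n ℂ := (herm.eigenvectorUnitary : Matrix n n ℂ) with hV
  have hVmem := (herm.eigenvectorUnitary).2
  have hV1 : V * Vᴴ = 1 := by
    have := (Matrix.mem_unitaryGroup_iff).mp hVmem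
    rwa [Matrix.star_eq_conjTranspose] at this
  have hV1' : Vᴴ * V = 1 := by
    have := (Matrix.mem_unitaryGroup_iff').mp hVmem
    rwa [Matrix.star_eq_conjTranspose] at this
  have hspec : A = V * Matrix.diagonal (fun i => ((herm.eigenvalues i : ℝ) : ℂ)) * Vᴴ := by
    have := herm.spectral_theorem
    rwa [Unitary.conjStarAlgAut_apply, Matrix.star_eq_conjTranspose] at this
  -- interpolating polynomial
  set S : Finset ℝ := Finset.image d Finset.univ ∪ Finset.image herm.eigenvalues Finset.univ
    with hS
  set p : ℝ[X] := Lagrange.interpolate S id f with hp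
  have hpev : ∀ x ∈ S, p.eval x = f x := by
    intro x hx
    exact Lagrange.eval_interpolate_at_node f (Set.injOn_id _) hx
  set q : ℂ[X] := p.map (algebraMap ℝ ℂ) with hq
  have hqev : ∀ x : ℝ, q.eval ((x : ℂ)) = ((p.eval x : ℝ) : ℂ) := by
    intro x
    rw [hq, Polynomial.eval_map]
    exact Polynomial.eval₂_at_apply (algebraMap ℝ ℂ) x
  have hd1 : (fun i => q.eval ((d i : ℂ))) = fun i => (f (d i) : ℂ) := by
    funext i
    rw [hqev, hpev (d i) (Finset.mem_union_left _ (Finset.mem_image_of_mem d (Finset.mem_univ i)))]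
  have hd2 : (fun i => q.eval ((herm.eigenvalues i : ℂ)))
      = fun i => (f (herm.eigenvalues i) : ℂ) := by
    funext i
    rw [hqev, hpev (herm.eigenvalues i)
      (Finset.mem_union_right _ (Finset.mem_image_of_mem _ (Finset.mem_univ i)))]
  have h1 : (aeval A q : Matrix n n ℂ) = U * Matrix.diagonal (fun i => (f (d i) : ℂ)) * Uᴴ := by
    conv_lhs => rw [hA]
    rw [aeval_conj q U _ hU hU', aeval_diagonal, hd1]
  have h2 : (aeval A q : Matrix n n ℂ)
      = V * Matrix.diagonal (fun i => (f (herm.eigenvalues i) : ℂ)) * Vᴴ := by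
    conv_lhs => rw [hspec]
    rw [aeval_conj q V _ hV1 hV1', aeval_diagonal, hd2]
  have h3 : matFun f A = V * Matrix.diagonal (fun i => (f (herm.eigenvalues i) : ℂ)) * Vᴴ := by
    rw [matFun, dif_pos herm]
  rw [h3, ← h2, h1]

lemma conjTranspose_kronecker {m : Type*} [Fintype m] [DecidableEq m]
    (A : Matrix n n ℂ) (B : Matrix m m ℂ) : (A ⊗ₖ B)ᴴ = Aᴴ ⊗ₖ Bᴴ := by
  ext p q
  simp [Matrix.conjTranspose_apply, Matrix.kroneckerMap_apply, mul_comm]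

lemma posdef_conj {P B : Matrix n n ℂ} (hP : P.PosDef) (hB : IsUnit B.det) :
    (B * P * Bᴴ).PosDef := by
  refine Matrix.PosDef.of_dotProduct_mulVec_pos ?_ ?_
  · unfold Matrix.IsHermitian
    rw [Matrix.conjTranspose_mul, Matrix.conjTranspose_mul, Matrix.conjTranspose_conjTranspose,
      hP.1.eq, Matrix.mul_assoc]
  · intro x hx
    have hBH : IsUnit (Bᴴ).det := by
      rw [Matrix.det_conjTranspose]
      exact hB.star
    have h0 : Bᴴ *ᵥ x ≠ 0 := by
      intro h
      apply hx
      have := congrArg (fun v => (Bᴴ)⁻¹ *ᵥ v) h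
      simpa [Matrix.mulVec_mulVec, Matrix.nonsing_inv_mul _ hBH] using this
    have key := hP.dotProduct_mulVec_pos h0
    simpa only [star_mulVec, Matrix.conjTranspose_conjTranspose, Matrix.dotProduct_mulVec,
      Matrix.vecMul_vecMul] using key

lemma eU_mul {A : Matrix n n ℂ} (hA : A.IsHermitian) :
    (hA.eigenvectorUnitary : Matrix n n ℂ) * (hA.eigenvectorUnitary : Matrix n n ℂ)ᴴ = 1 := by
  have := (Matrix.mem_unitaryGroup_iff).mp (hA.eigenvectorUnitary).2
  rwa [Matrix.star_eq_conjTranspose] at this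

lemma eU_mul' {A : Matrix n n ℂ} (hA : A.IsHermitian) :
    (hA.eigenvectorUnitary : Matrix n n ℂ)ᴴ * (hA.eigenvectorUnitary : Matrix n n ℂ) = 1 := by
  have := (Matrix.mem_unitaryGroup_iff').mp (hA.eigenvectorUnitary).2
  rwa [Matrix.star_eq_conjTranspose] at this

lemma spec' {A : Matrix n n ℂ} (hA : A.IsHermitian) :
    A = (hA.eigenvectorUnitary : Matrix n n ℂ)
      * Matrix.diagonal (fun i => (hA.eigenvalues i : ℂ))
      * (hA.eigenvectorUnitary : Matrix n n ℂ)ᴴ := by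
  have := hA.spectral_theorem
  rwa [Unitary.conjStarAlgAut_apply, Matrix.star_eq_conjTranspose] at this

lemma matFun_herm (f : ℝ → ℝ) {A : Matrix n n ℂ} (hA : A.IsHermitian) :
    matFun f A = (hA.eigenvectorUnitary : Matrix n n ℂ)
      * Matrix.diagonal (fun i => (f (hA.eigenvalues i) : ℂ))
      * (hA.eigenvectorUnitary : Matrix n n ℂ)ᴴ := by
  rw [matFun, dif_pos hA]

variable {m : Type*} [Fintype m] [DecidableEq m]

lemma matFun_kron (f : ℝ → ℝ) {A : Matrix n n ℂ} {B : Matrix m m ℂ}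
    (hA : A.IsHermitian) (hB : B.IsHermitian) :
    matFun f (A ⊗ₖ B) =
      ((hA.eigenvectorUnitary : Matrix n n ℂ) ⊗ₖ (hB.eigenvectorUnitary : Matrix m m ℂ)) *
        Matrix.diagonal (fun p : n × m => (f (hA.eigenvalues p.1 * hB.eigenvalues p.2) : ℂ)) *
        ((hA.eigenvectorUnitary : Matrix n n ℂ) ⊗ₖ (hB.eigenvectorUnitary : Matrix m m ℂ))ᴴ := by
  apply matFun_eq f _ _ (fun p : n × m => hA.eigenvalues p.1 * hB.eigenvalues p.2)
  · rw [conjTranspose_kronecker, ← Matrix.mul_kronecker_mul, eU_mul hA, eU_mul hB,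
      Matrix.one_kronecker_one]
  · rw [conjTranspose_kronecker, ← Matrix.mul_kronecker_mul, eU_mul' hA, eU_mul' hB,
      Matrix.one_kronecker_one]
  · conv_lhs => rw [spec' hA, spec' hB]
    rw [Matrix.mul_kronecker_mul, Matrix.mul_kronecker_mul, Matrix.diagonal_kronecker_diagonal,
      conjTranspose_kronecker]
    congr 2
    funext p
    push_cast
    ring

lemma mpow_kron (t : ℝ) {A : Matrix n n ℂ} {B : Matrix m m ℂ}
    (hA : A.PosDef) (hB : B.PosDef) :
    mpow (A ⊗ₖ B) t = mpow A t ⊗ₖ mpow B t := by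
  rw [mpow, mpow, mpow, matFun_kron _ hA.1 hB.1, matFun_herm _ hA.1, matFun_herm _ hB.1,
    Matrix.mul_kronecker_mul, Matrix.mul_kronecker_mul, Matrix.diagonal_kronecker_diagonal,
    ← conjTranspose_kronecker]
  have hfun : (fun p : n × m => (((hA.1.eigenvalues p.1 * hB.1.eigenvalues p.2) ^ t : ℝ) : ℂ))
      = fun p : n × m =>
        ((hA.1.eigenvalues p.1 ^ t : ℝ) : ℂ) * ((hB.1.eigenvalues p.2 ^ t : ℝ) : ℂ) := by
    funext p
    rw [Real.mul_rpow (hA.eigenvalues_pos p.1).le (hB.eigenvalues_pos p.2).le,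
      Complex.ofReal_mul]
  rw [hfun]

lemma mlog_kron {A : Matrix n n ℂ} {B : Matrix m m ℂ} (hA : A.PosDef) (hB : B.PosDef) :
    mlog (A ⊗ₖ B) = mlog A ⊗ₖ (1 : Matrix m m ℂ) + (1 : Matrix n n ℂ) ⊗ₖ mlog B := by
  rw [mlog, mlog, mlog, matFun_kron _ hA.1 hB.1, matFun_herm _ hA.1, matFun_herm _ hB.1]
  have hdiag : (fun p : n × m => ((Real.log (hA.1.eigenvalues p.1 * hB.1.eigenvalues p.2) : ℝ) : ℂ))
      = fun p : n × m => ((Real.log (hA.1.eigenvalues p.1) : ℝ) : ℂ)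
        + ((Real.log (hB.1.eigenvalues p.2) : ℝ) : ℂ) := by
    funext p
    rw [Real.log_mul (hA.eigenvalues_pos p.1).ne' (hB.eigenvalues_pos p.2).ne',
      Complex.ofReal_add]
  rw [hdiag]
  rw [show (Matrix.diagonal fun p : n × m => ((Real.log (hA.1.eigenvalues p.1) : ℝ) : ℂ)
        + ((Real.log (hB.1.eigenvalues p.2) : ℝ) : ℂ))
      = Matrix.diagonal (fun p : n × m => ((Real.log (hA.1.eigenvalues p.1) : ℝ) : ℂ))
        + Matrix.diagonal (fun p : n × m => ((Real.log (hB.1.eigenvalues p.2) : ℝ) : ℂ))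
      from (Matrix.diagonal_add _ _).symm]
  have hD1 : Matrix.diagonal (fun p : n × m => ((Real.log (hA.1.eigenvalues p.1) : ℝ) : ℂ))
      = Matrix.diagonal (fun i : n => ((Real.log (hA.1.eigenvalues i) : ℝ) : ℂ))
        ⊗ₖ (1 : Matrix m m ℂ) := by
    rw [← Matrix.diagonal_one, Matrix.diagonal_kronecker_diagonal]
    simp
  have hD2 : Matrix.diagonal (fun p : n × m => ((Real.log (hB.1.eigenvalues p.2) : ℝ) : ℂ))
      = (1 : Matrix n n ℂ)
        ⊗ₖ Matrix.diagonal (fun j : m => ((Real.log (hB.1.eigenvalues j) : ℝ) : ℂ)) := by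
    rw [← Matrix.diagonal_one, Matrix.diagonal_kronecker_diagonal]
    simp
  rw [Matrix.mul_add, Matrix.add_mul, hD1, hD2, conjTranspose_kronecker]
  congr 1
  · rw [← Matrix.mul_kronecker_mul, ← Matrix.mul_kronecker_mul, Matrix.mul_one, eU_mul hB.1]
  · rw [← Matrix.mul_kronecker_mul, ← Matrix.mul_kronecker_mul, Matrix.mul_one, eU_mul hA.1]

lemma mpow_half_mul_self {X : Matrix n n ℂ} (hX : X.PosDef) :
    mpow X (1/2) * mpow X (1/2) = X := by
  rw [mpow, matFun_herm _ hX.1]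
  set U : Matrix n n ℂ := (hX.1.eigenvectorUnitary : Matrix n n ℂ)
  set D : Matrix n n ℂ :=
    Matrix.diagonal (fun i => ((hX.1.eigenvalues i ^ (1/2 : ℝ) : ℝ) : ℂ)) with hD
  have key : U * D * Uᴴ * (U * D * Uᴴ) = U * (D * D) * Uᴴ := by
    calc U * D * Uᴴ * (U * D * Uᴴ) = U * D * (Uᴴ * U) * D * Uᴴ := by
          simp only [Matrix.mul_assoc]
      _ = U * (D * D) * Uᴴ := by rw [eU_mul' hX.1]; simp only [Matrix.mul_assoc, Matrix.mul_one]
  rw [key, hD, Matrix.diagonal_mul_diagonal]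
  have : (fun i => ((hX.1.eigenvalues i ^ (1/2 : ℝ) : ℝ) : ℂ)
      * ((hX.1.eigenvalues i ^ (1/2 : ℝ) : ℝ) : ℂ)) = fun i => ((hX.1.eigenvalues i : ℝ) : ℂ) := by
    funext i
    rw [← Complex.ofReal_mul, ← Real.rpow_add (hX.eigenvalues_pos i)]
    norm_num
  rw [this, ← spec' hX.1]

lemma mpow_posdef {X : Matrix n n ℂ} (hX : X.PosDef) (t : ℝ) : (mpow X t).PosDef := by
  rw [mpow, matFun_herm _ hX.1]
  refine posdef_conj (Matrix.posDef_diagonal_iff.mpr fun i => ?_) ?_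
  · rw [Complex.zero_lt_real]
    exact Real.rpow_pos_of_pos (hX.eigenvalues_pos i) t
  · have h := congrArg Matrix.det (eU_mul hX.1)
    rw [Matrix.det_mul, Matrix.det_one] at h
    exact IsUnit.of_mul_eq_one _ h

end DopAux

/-- tensorization of the operator relative entropy:
`D_op(X₁ ⊗ X₂ ‖ Y₁ ⊗ Y₂) = D_op(X₁‖Y₁) ⊗ X₂ + X₁ ⊗ D_op(X₂‖Y₂)`. -/
theorem Dop_kronecker {n m : ℕ}
    (X₁ Y₁ : Matrix (Fin n) (Fin n) ℂ) (hX₁ : X₁.PosDef) (hY₁ : Y₁.PosDef)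
    (X₂ Y₂ : Matrix (Fin m) (Fin m) ℂ) (hX₂ : X₂.PosDef) (hY₂ : Y₂.PosDef) :
    Dop (X₁ ⊗ₖ X₂) (Y₁ ⊗ₖ Y₂) = (Dop X₁ Y₁) ⊗ₖ X₂ + X₁ ⊗ₖ (Dop X₂ Y₂) := by
  have hS₁ := DopAux.mpow_posdef hX₁ (1/2)
  have hS₂ := DopAux.mpow_posdef hX₂ (1/2)
  have hdet₁ : IsUnit (mpow X₁ (1/2)).det := hS₁.isUnit.map detMonoidHom
  have hdet₂ : IsUnit (mpow X₂ (1/2)).det := hS₂.isUnit.map detMonoidHom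
  have hA₁ : (mpow X₁ (1/2) * Y₁⁻¹ * mpow X₁ (1/2)).PosDef := by
    have h := DopAux.posdef_conj hY₁.inv hdet₁
    rwa [hS₁.1.eq] at h
  have hA₂ : (mpow X₂ (1/2) * Y₂⁻¹ * mpow X₂ (1/2)).PosDef := by
    have h := DopAux.posdef_conj hY₂.inv hdet₂
    rwa [hS₂.1.eq] at h
  simp only [Dop]
  rw [DopAux.mpow_kron _ hX₁ hX₂, Matrix.inv_kronecker,
    ← Matrix.mul_kronecker_mul, ← Matrix.mul_kronecker_mul,
    DopAux.mlog_kron hA₁ hA₂, Matrix.mul_add, Matrix.add_mul,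
    ← Matrix.mul_kronecker_mul, ← Matrix.mul_kronecker_mul,
    ← Matrix.mul_kronecker_mul, ← Matrix.mul_kronecker_mul,
    Matrix.mul_one, Matrix.mul_one,
    DopAux.mpow_half_mul_self hX₁, DopAux.mpow_half_mul_self hX₂]
end
end

section
/- Let X and Y be positive definite complex n×n matrices. (a) If N is a Hermitian complex n×n matrix such that the block matrix fromBlocks X N N Y (i.e., [[X, N],[N, Y]]) is positive semidefinite, then N ≤ G_{1/2}(X,Y). (b) Conversely, the block matrix [[X, G_{1/2}(X,Y)],[G_{1/2}(X,Y), Y]] is positive semidefinite. -/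
open Matrix Kronecker
open scoped ComplexOrder

noncomputable section

namespace GeoAux
variable {n : Type*} [Fintype n] [DecidableEq n] {A : Matrix n n ℂ}


lemma matFun_eq (hA : A.IsHermitian) (f : ℝ → ℝ) :
    matFun f A = (hA.eigenvectorUnitary : Matrix n n ℂ) *
      Matrix.diagonal (fun i => (f (hA.eigenvalues i) : ℂ)) *
      (hA.eigenvectorUnitary : Matrix n n ℂ)ᴴ := by
  rw [matFun, dif_pos hA]

lemma hU'U (hA : A.IsHermitian) :
    (hA.eigenvectorUnitary : Matrix n n ℂ)ᴴ * (hA.eigenvectorUnitary : Matrix n n ℂ) = 1 := by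
  simpa [Matrix.star_eq_conjTranspose] using
    (Matrix.mem_unitaryGroup_iff'.mp hA.eigenvectorUnitary.2)

lemma hUU' (hA : A.IsHermitian) :
    (hA.eigenvectorUnitary : Matrix n n ℂ) * (hA.eigenvectorUnitary : Matrix n n ℂ)ᴴ = 1 := by
  simpa [Matrix.star_eq_conjTranspose] using
    (Matrix.mem_unitaryGroup_iff.mp hA.eigenvectorUnitary.2)

lemma matFun_isHermitian (hA : A.IsHermitian) (f : ℝ → ℝ) : (matFun f A).IsHermitian := by
  rw [matFun_eq hA]
  unfold Matrix.IsHermitian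
  simp [Matrix.conjTranspose_mul, Matrix.diagonal_conjTranspose, Matrix.mul_assoc,
    Pi.star_def, Complex.conj_ofReal]

lemma matFun_mul (hA : A.IsHermitian) (f g : ℝ → ℝ) :
    matFun f A * matFun g A = matFun (fun x => f x * g x) A := by
  rw [matFun_eq hA f, matFun_eq hA g, matFun_eq hA]
  set U := (hA.eigenvectorUnitary : Matrix n n ℂ) with hU
  have key : ∀ (D E : Matrix n n ℂ), (U*D*Uᴴ)*(U*E*Uᴴ) = U*(D*E)*Uᴴ := by
    intro D E
    calc (U*D*Uᴴ)*(U*E*Uᴴ) = U*D*((Uᴴ*U)*(E*Uᴴ)) := by simp only [Matrix.mul_assoc]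
    _ = U*(D*E)*Uᴴ := by rw [hU'U hA]; simp only [Matrix.mul_assoc, Matrix.one_mul]
  rw [key, Matrix.diagonal_mul_diagonal]
  congr 2
  funext i
  push_cast
  ring

lemma matFun_congr (hA : A.IsHermitian) {f g : ℝ → ℝ}
    (h : ∀ i, f (hA.eigenvalues i) = g (hA.eigenvalues i)) : matFun f A = matFun g A := by
  rw [matFun_eq hA, matFun_eq hA]
  have : (fun i => (f (hA.eigenvalues i) : ℂ)) = fun i => (g (hA.eigenvalues i) : ℂ) := by
    funext i; rw [h i]
  rw [this]

lemma matFun_id (hA : A.IsHermitian) : matFun (fun x => x) A = A := by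
  rw [matFun_eq hA]
  exact hA.spectral_theorem.symm

lemma matFun_one (hA : A.IsHermitian) : matFun (fun _ => 1) A = 1 := by
  rw [matFun_eq hA]
  simp [hUU' hA]

lemma matFun_posSemidef (hA : A.IsHermitian) {f : ℝ → ℝ}
    (h : ∀ i, 0 ≤ f (hA.eigenvalues i)) : (matFun f A).PosSemidef := by
  rw [matFun_eq hA]
  exact (Matrix.posSemidef_diagonal_iff.mpr fun i => Complex.zero_le_real.mpr (h i)
    ).mul_mul_conjTranspose_same _

lemma matFun_sub (hA : A.IsHermitian) (f g : ℝ → ℝ) :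
    matFun f A - matFun g A = matFun (fun x => f x - g x) A := by
  rw [matFun_eq hA f, matFun_eq hA g, matFun_eq hA]
  rw [← Matrix.sub_mul, ← Matrix.mul_sub, Matrix.diagonal_sub]
  congr 2
  ext i
  push_cast
  ring



lemma posSemidef_sub_of_sq {P Q : Matrix n n ℂ} (hP : P.PosSemidef) (hQ : Q.PosSemidef)
    (h : (Q * Q - P * P).PosSemidef) : (Q - P).PosSemidef := by
  have hH : (Q - P).IsHermitian := hQ.1.sub hP.1
  refine hH.posSemidef_iff_eigenvalues_nonneg.mpr (Pi.le_def.mpr fun i => show (0:ℝ) ≤ hH.eigenvalues i from ?_)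
  set lam := hH.eigenvalues i with hlam
  set v : n → ℂ := ⇑(hH.eigenvectorBasis i) with hvdef
  have hv0 : v ≠ 0 := by
    have := hH.eigenvectorBasis.orthonormal.ne_zero i
    intro hc
    apply this
    ext j
    exact congrFun hc j
  have hv : (Q - P) *ᵥ v = (lam : ℂ) • v := by
    have := hH.mulVec_eigenvectorBasis i
    rw [← hvdef, ← hlam] at this
    rw [this]
    ext j
    simp [Complex.real_smul]
  have expand : Q * Q - P * P = Q * (Q - P) + (Q - P) * P := by noncomm_ring
  have key : (0 : ℂ) ≤ (lam : ℂ) * (star v ⬝ᵥ Q *ᵥ v) + (lam : ℂ) * (star v ⬝ᵥ P *ᵥ v) := by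
    have h2 := h.dotProduct_mulVec_nonneg v
    rw [expand] at h2
    rw [Matrix.add_mulVec, dotProduct_add] at h2
    have e1 : star v ⬝ᵥ (Q * (Q - P)) *ᵥ v = (lam : ℂ) * (star v ⬝ᵥ Q *ᵥ v) := by
      rw [← Matrix.mulVec_mulVec, hv, Matrix.mulVec_smul, dotProduct_smul, smul_eq_mul]
    have e2 : star v ⬝ᵥ ((Q - P) * P) *ᵥ v = (lam : ℂ) * (star v ⬝ᵥ P *ᵥ v) := by
      rw [← Matrix.mulVec_mulVec, dotProduct_mulVec]
      have : star v ᵥ* (Q - P) = (lam : ℂ) • star v := by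
        rw [← hH.eq, ← Matrix.star_mulVec, hv]
        ext j
        simp [mul_comm]
      rw [this, smul_dotProduct, smul_eq_mul]
    rwa [e1, e2] at h2
  have hq := hQ.dotProduct_mulVec_nonneg v
  have hp := hP.dotProduct_mulVec_nonneg v
  -- take real parts
  have hqre : 0 ≤ (star v ⬝ᵥ Q *ᵥ v).re := (Complex.le_def.mp hq).1
  have hpre : 0 ≤ (star v ⬝ᵥ P *ᵥ v).re := (Complex.le_def.mp hp).1
  have hkey : 0 ≤ lam * ((star v ⬝ᵥ Q *ᵥ v).re + (star v ⬝ᵥ P *ᵥ v).re) := by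
    have := (Complex.le_def.mp key).1
    simpa [Complex.add_re, Complex.re_ofReal_mul, mul_add] using this
  rcases eq_or_lt_of_le (by positivity : (0:ℝ) ≤ (star v ⬝ᵥ Q *ᵥ v).re + (star v ⬝ᵥ P *ᵥ v).re) with hs | hs
  · -- sum of the two quadratic forms is zero, hence both vanish and lam = 0
    have hq0 : (star v ⬝ᵥ Q *ᵥ v) = 0 := by
      have : (star v ⬝ᵥ Q *ᵥ v).re = 0 := by linarith
      exact Complex.ext this ((Complex.le_def.mp hq).2.symm ▸ rfl)
    have hp0 : (star v ⬝ᵥ P *ᵥ v) = 0 := by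
      have : (star v ⬝ᵥ P *ᵥ v).re = 0 := by linarith
      exact Complex.ext this ((Complex.le_def.mp hp).2.symm ▸ rfl)
    have hQv : Q *ᵥ v = 0 := (hQ.dotProduct_mulVec_zero_iff v).mp hq0
    have hPv : P *ᵥ v = 0 := (hP.dotProduct_mulVec_zero_iff v).mp hp0
    have : (lam : ℂ) • v = 0 := by
      rw [← hv, Matrix.sub_mulVec, hQv, hPv, sub_zero]
    rcases smul_eq_zero.mp this with h0 | h0
    · simp only [Complex.ofReal_eq_zero] at h0
      exact le_of_eq h0.symm
    · exact absurd h0 hv0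
  · by_contra hneg
    push_neg at hneg
    nlinarith

end GeoAux

open GeoAux

set_option maxHeartbeats 2000000

/-- semidefinite characterization of the matrix geometric mean `G_{1/2}`:
(a) if `[[X, N],[N, Y]]` is PSD for Hermitian `N`, then `N ≤ G_{1/2}(X,Y)`;
(b) `[[X, G_{1/2}(X,Y)],[G_{1/2}(X,Y), Y]]` is PSD. -/
theorem geoMean_half_sdp_characterization {n : ℕ}
    (X Y : Matrix (Fin n) (Fin n) ℂ) (hX : X.PosDef) (hY : Y.PosDef) :
    (∀ N : Matrix (Fin n) (Fin n) ℂ, N.IsHermitian →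
      (Matrix.fromBlocks X N N Y).PosSemidef → (geoMean (1/2) X Y - N).PosSemidef) ∧
    (Matrix.fromBlocks X (geoMean (1/2) X Y) (geoMean (1/2) X Y) Y).PosSemidef := by
  have hXh : X.IsHermitian := hX.1
  set S := mpow X (1/2) with hSdef
  set T := mpow X (-(1/2)) with hTdef
  have hS : S.IsHermitian := matFun_isHermitian hXh _
  have hT : T.IsHermitian := matFun_isHermitian hXh _
  have hST : S * T = 1 := by
    rw [hSdef, hTdef, mpow, mpow, matFun_mul hXh,
      matFun_congr hXh (g := fun _ => 1) (fun i => by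
        rw [← Real.rpow_add (hX.eigenvalues_pos i)]; norm_num),
      matFun_one hXh]
  have hTS : T * S = 1 := by
    rw [hTdef, hSdef, mpow, mpow, matFun_mul hXh,
      matFun_congr hXh (g := fun _ => 1) (fun i => by
        rw [← Real.rpow_add (hX.eigenvalues_pos i)]; norm_num),
      matFun_one hXh]
  have hSS : S * S = X := by
    rw [hSdef, mpow, matFun_mul hXh,
      matFun_congr hXh (g := fun x => x) (fun i => by
        rw [← Real.rpow_add (hX.eigenvalues_pos i)]; norm_num),
      matFun_id hXh]
  set M := T * Y * T with hMdef
  have hM : M.PosSemidef := by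
    have := hY.posSemidef.mul_mul_conjTranspose_same T
    rwa [hT.eq] at this
  have hMh : M.IsHermitian := hM.1
  set K := mpow M (1/2) with hKdef
  have hKh : K.IsHermitian := matFun_isHermitian hMh _
  have hK : K.PosSemidef := matFun_posSemidef hMh fun i =>
    Real.rpow_nonneg (hM.eigenvalues_nonneg i) _
  have hKK : K * K = M := by
    rw [hKdef, mpow, matFun_mul hMh,
      matFun_congr hMh (g := fun x => x) (fun i => by
        rw [← Real.rpow_add' (hM.eigenvalues_nonneg i) (by norm_num : (1/2:ℝ)+1/2 ≠ 0)]
        norm_num),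
      matFun_id hMh]
  have hGeq : geoMean (1/2) X Y = S * K * S := rfl
  have hGherm : (S * K * S)ᴴ = S * K * S := by
    simp only [Matrix.conjTranspose_mul, hS.eq, hKh.eq, Matrix.mul_assoc]
  have hXright : X * (T * T) = 1 := by
    rw [← hSS, Matrix.mul_assoc, ← Matrix.mul_assoc S T T, hST, Matrix.one_mul, hST]
  haveI : Invertible X := invertibleOfRightInverse _ _ hXright
  have hXinv : X⁻¹ = T * T := Matrix.inv_eq_right_inv hXright
  constructor
  · intro N hN hblk
    set A := T * N * T with hAdef
    have hAh : A.IsHermitian := by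
      unfold Matrix.IsHermitian
      simp only [hAdef, Matrix.conjTranspose_mul, hT.eq, hN.eq, Matrix.mul_assoc]
    have hTXT : T * X * T = 1 := by
      rw [← hSS, ← Matrix.mul_assoc T S S, hTS, Matrix.one_mul, hST]
    have hblk2 : (Matrix.fromBlocks 1 A A M).PosSemidef := by
      have h := hblk.mul_mul_conjTranspose_same (Matrix.fromBlocks T 0 0 T)
      have e : Matrix.fromBlocks T 0 0 T * Matrix.fromBlocks X N N Y *
          (Matrix.fromBlocks T 0 0 T)ᴴ = Matrix.fromBlocks 1 A A M := by
        rw [Matrix.fromBlocks_conjTranspose, Matrix.conjTranspose_zero, hT.eq,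
          Matrix.fromBlocks_multiply, Matrix.fromBlocks_multiply]
        congr 1 <;> simp [hTXT, hAdef, hMdef]
      rwa [e] at h
    haveI : Invertible (1 : Matrix (Fin n) (Fin n) ℂ) := invertibleOne
    have hSchur : (M - A * A).PosSemidef := by
      have h1 : (Matrix.fromBlocks 1 A Aᴴ M).PosSemidef := by rwa [hAh.eq]
      have hinv1 : (1 : Matrix (Fin n) (Fin n) ℂ)⁻¹ = 1 := Matrix.inv_eq_right_inv (by simp)
      have := (Matrix.PosDef.fromBlocks₁₁ A M Matrix.PosDef.one).mp h1
      rwa [hinv1, Matrix.mul_one, hAh.eq] at this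
    set B := matFun (fun x => |x|) A with hBdef
    have hB : B.PosSemidef := matFun_posSemidef hAh fun i => abs_nonneg _
    have hBB : B * B = A * A := by
      calc B * B = matFun (fun x => |x| * |x|) A := matFun_mul hAh _ _
        _ = matFun (fun x => x * x) A := matFun_congr hAh (fun i => abs_mul_abs_self _)
        _ = matFun (fun x => x) A * matFun (fun x => x) A := (matFun_mul hAh _ _).symm
        _ = A * A := by rw [matFun_id hAh]
    have hKB : (K - B).PosSemidef := posSemidef_sub_of_sq hB hK (by rw [hKK, hBB]; exact hSchur)
    have hBA : (B - A).PosSemidef := by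
      have e := matFun_sub hAh (fun x => |x|) (fun x => x)
      rw [matFun_id hAh] at e
      rw [hBdef, e]
      exact matFun_posSemidef hAh fun i => sub_nonneg.mpr (le_abs_self _)
    have hKA : (K - A).PosSemidef := by
      have := hKB.add hBA
      rwa [sub_add_sub_cancel] at this
    have hSAS : S * A * S = N := by
      rw [hAdef, ← Matrix.mul_assoc S (T * N) T, ← Matrix.mul_assoc S T N, hST,
        Matrix.one_mul, Matrix.mul_assoc N T S, hTS, Matrix.mul_one]
    have e2 : geoMean (1/2) X Y - N = S * (K - A) * S := by
      rw [Matrix.mul_sub, Matrix.sub_mul, hSAS, hGeq]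
    rw [e2]
    have := hKA.mul_mul_conjTranspose_same S
    rwa [hS.eq] at this
  · have hGXG : (geoMean (1/2) X Y)ᴴ * X⁻¹ * geoMean (1/2) X Y = Y := by
      rw [hGeq, hGherm, hXinv]
      have c1 : ∀ Z : Matrix (Fin n) (Fin n) ℂ, S * (T * Z) = Z := fun Z => by
        rw [← Matrix.mul_assoc, hST, Matrix.one_mul]
      have c2 : ∀ Z : Matrix (Fin n) (Fin n) ℂ, T * (S * Z) = Z := fun Z => by
        rw [← Matrix.mul_assoc, hTS, Matrix.one_mul]
      calc S * K * S * (T * T) * (S * K * S)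
          = S * (K * (S * (T * (T * (S * (K * S)))))) := by
            simp only [Matrix.mul_assoc]
        _ = S * (K * (K * S)) := by rw [c2, c1]
        _ = S * (K * K) * S := by simp only [Matrix.mul_assoc]
        _ = S * (T * (Y * (T * S))) := by rw [hKK, hMdef]; simp only [Matrix.mul_assoc]
        _ = Y := by rw [hTS, Matrix.mul_one, c1]
    have h0 : (Y - (geoMean (1/2) X Y)ᴴ * X⁻¹ * geoMean (1/2) X Y).PosSemidef := by
      rw [hGXG, sub_self]
      exact Matrix.PosSemidef.zero
    have := (Matrix.PosDef.fromBlocks₁₁ (geoMean (1/2) X Y) Y hX).mpr h0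
    rwa [hGeq, hGherm, ← hGeq] at this
end
end
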